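/- (Imbalance identity.) Let v be a node of a flow network with node set N. Let Small and Large be disjoint sets of ordered pairs of distinct nodes such that every pair (v,j) and every pair (j,v) with j ≠ v lies in exactly one of Small and Large, and such that (v,j) ∈ Small if and only if (j,v) ∈ Small. Let Anti ⊆ Large be a set such that for every (v,j) ∈ Large exactly one of (v,j) and (j,v) belongs to Anti. For capacity-feasible functions x and y write D_{ij} = r_{ij}(y) − r_{ij}(x), and define IMB(v, y−x) = (e_y(v) − e_x(v)) + Σ_{(j,v)∈Anti} D_{jv} − Σ_{(v,j)∈Anti} D_{vj}. Then IMB(v, y−x) = Σ_{(v,j)∈Small} D_{vj}, and consequently |IMB(v, y−x)| ≤ Σ_{(v,j)∈Small} (u(v,j) + u(j,v)). -/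
import Mathlib


open Finset

variable {V : Type*}

/-- The excess of node `v` under `x`: total inflow minus total outflow. -/
def excess [Fintype V] (x : V → V → ℝ) (v : V) : ℝ :=
  (∑ j, x j v) - ∑ j, x v j

/-- `x` is capacity-feasible for capacities `u`: `0 ≤ x i j ≤ u i j` on distinct pairs. -/
def IsCapFeasible (u x : V → V → ℝ) : Prop :=
  ∀ i j, i ≠ j → 0 ≤ x i j ∧ x i j ≤ u i j

/-- A preflow: capacity-feasible with nonnegative excess at every node other than `s`. -/
def IsPreflow [Fintype V] (u : V → V → ℝ) (s : V) (x : V → V → ℝ) : Prop :=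
  IsCapFeasible u x ∧ ∀ v, v ≠ s → 0 ≤ excess x v

/-- A flow: capacity-feasible with zero excess at every node other than `s` and `t`. -/
def IsFlow [Fintype V] (u : V → V → ℝ) (s t : V) (x : V → V → ℝ) : Prop :=
  IsCapFeasible u x ∧ ∀ v, v ≠ s → v ≠ t → excess x v = 0

/-- Residual capacity of the pair `(i,j)` with respect to `x`. -/
def res (u x : V → V → ℝ) (i j : V) : ℝ := u i j + x j i - x i j

/-- A labeling `d` is valid w.r.t. `x`: `d t = 0` and `d i ≤ d j + 1` across residual arcs. -/
def IsValidLabeling [Fintype V] (u x : V → V → ℝ) (t : V) (d : V → ℕ) : Prop :=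
  d t = 0 ∧ ∀ i j, i ≠ j → 0 < res u x i j → d i ≤ d j + 1

/-- Imbalance identity: the change of the `Δ`-imbalance of `v` between two
capacity-feasible functions equals the change of residual capacities on the small
arcs leaving `v`, and is hence bounded by the total small bi-capacity at `v`. -/
theorem imbalance_identity [Fintype V] [DecidableEq V] (s t : V) (hst : s ≠ t)
    (u : V → V → ℝ) (hu : ∀ i j, i ≠ j → 0 ≤ u i j)
    (x y : V → V → ℝ) (hx : IsCapFeasible u x) (hy : IsCapFeasible u y)
    (v : V) (Small Large Anti : Finset (V × V))
    (hSmallNe : ∀ q ∈ Small, q.1 ≠ q.2) (hLargeNe : ∀ q ∈ Large, q.1 ≠ q.2)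
    (hdisj : Disjoint Small Large)
    (hcover : ∀ j, j ≠ v →
      (((v, j) ∈ Small ∨ (v, j) ∈ Large) ∧ ((j, v) ∈ Small ∨ (j, v) ∈ Large)))
    (hSmallSymm : ∀ j : V, ((v, j) ∈ Small ↔ (j, v) ∈ Small))
    (hAntiSub : Anti ⊆ Large)
    (hAntiOne : ∀ j : V, (v, j) ∈ Large → ((v, j) ∈ Anti ↔ (j, v) ∉ Anti)) :
    ((excess y v - excess x v)
        + ∑ j ∈ univ.filter (fun j => (j, v) ∈ Anti), (res u y j v - res u x j v)
        - ∑ j ∈ univ.filter (fun j => (v, j) ∈ Anti), (res u y v j - res u x v j))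
      = ∑ j ∈ univ.filter (fun j => (v, j) ∈ Small), (res u y v j - res u x v j) ∧
    |(excess y v - excess x v)
        + ∑ j ∈ univ.filter (fun j => (j, v) ∈ Anti), (res u y j v - res u x j v)
        - ∑ j ∈ univ.filter (fun j => (v, j) ∈ Anti), (res u y v j - res u x v j)|
      ≤ ∑ j ∈ univ.filter (fun j => (v, j) ∈ Small), (u v j + u j v) := by
  classical
  set f : V → ℝ := fun j => res u y v j - res u x v j with hf
  have hfv : f v = 0 := by simp [hf, res]
  have hback : ∀ j, res u y j v - res u x j v = -(f j) := by
    intro j; simp only [hf, res]; ring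
  set S := univ.filter (fun j => (v, j) ∈ Small) with hS
  set A1 := univ.filter (fun j => (j, v) ∈ Anti) with hA1
  set A2 := univ.filter (fun j => (v, j) ∈ Anti) with hA2
  set L := univ.filter (fun j => (v, j) ∈ Large) with hL
  have hdisjA : Disjoint A1 A2 := by
    rw [Finset.disjoint_left]
    intro j h1 h2
    simp only [hA1, hA2, mem_filter, mem_univ, true_and] at h1 h2
    exact (hAntiOne j (hAntiSub h2)).mp h2 h1
  have hunion : A1 ∪ A2 = L := by
    ext j
    simp only [hA1, hA2, hL, mem_union, mem_filter, mem_univ, true_and]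
    constructor
    · rintro (h | h)
      · have hLjv : (j, v) ∈ Large := hAntiSub h
        have hjv : j ≠ v := hLargeNe _ hLjv
        rcases (hcover j hjv).1 with hs | hl
        · exact absurd hLjv (Finset.disjoint_left.mp hdisj ((hSmallSymm j).mp hs))
        · exact hl
      · exact hAntiSub h
    · intro hLj
      by_cases h : (v, j) ∈ Anti
      · exact Or.inr h
      · exact Or.inl (not_not.mp (fun hc => h ((hAntiOne j hLj).mpr hc)))
  have hvS : v ∉ S := by
    simp only [hS, mem_filter, mem_univ, true_and]
    exact fun hc => (hSmallNe _ hc) rfl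
  have hvL : v ∉ L := by
    simp only [hL, mem_filter, mem_univ, true_and]
    exact fun hc => (hLargeNe _ hc) rfl
  have hdisjSL : Disjoint S L := by
    rw [Finset.disjoint_left]
    intro j h1 h2
    simp only [hS, hL, mem_filter, mem_univ, true_and] at h1 h2
    exact Finset.disjoint_left.mp hdisj h1 h2
  have huniv : S ∪ L ∪ {v} = univ := by
    ext j
    simp only [mem_union, mem_singleton, mem_univ, iff_true, hS, hL, mem_filter, true_and]
    by_cases hjv : j = v
    · exact Or.inr hjv
    · rcases (hcover j hjv).1 with hs | hl
      · exact Or.inl (Or.inl hs)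
      · exact Or.inl (Or.inr hl)
  have hdisjSLv : Disjoint (S ∪ L) {v} := by
    simp [Finset.disjoint_singleton_right, hvS, hvL]
  have hsumuniv : ∑ j, f j = ∑ j ∈ S, f j + ∑ j ∈ L, f j := by
    rw [← huniv, Finset.sum_union hdisjSLv, Finset.sum_union hdisjSL,
      Finset.sum_singleton, hfv, add_zero]
  have hexc : excess y v - excess x v = ∑ j, f j := by
    simp only [excess, hf, res, ← Finset.sum_sub_distrib]
    apply Finset.sum_congr rfl
    intro j _
    ring
  have hA1sum : ∑ j ∈ A1, (res u y j v - res u x j v) = -∑ j ∈ A1, f j := by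
    rw [← Finset.sum_neg_distrib]
    exact Finset.sum_congr rfl fun j _ => hback j
  have hLsum : ∑ j ∈ A1, f j + ∑ j ∈ A2, f j = ∑ j ∈ L, f j := by
    rw [← Finset.sum_union hdisjA, hunion]
  have key : ((excess y v - excess x v)
        + ∑ j ∈ univ.filter (fun j => (j, v) ∈ Anti), (res u y j v - res u x j v)
        - ∑ j ∈ univ.filter (fun j => (v, j) ∈ Anti), (res u y v j - res u x v j))
      = ∑ j ∈ S, f j := by
    rw [hexc]
    show (∑ j, f j) + ∑ j ∈ A1, (res u y j v - res u x j v) - ∑ j ∈ A2, f j = _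
    rw [hA1sum, hsumuniv]
    linarith [hLsum]
  refine ⟨key, ?_⟩
  rw [key]
  calc |∑ j ∈ S, f j| ≤ ∑ j ∈ S, |f j| := Finset.abs_sum_le_sum_abs _ _
    _ ≤ ∑ j ∈ S, (u v j + u j v) := by
        apply Finset.sum_le_sum
        intro j hj
        simp only [hS, mem_filter, mem_univ, true_and] at hj
        have hne : v ≠ j := hSmallNe _ hj
        have h1 := hx v j hne
        have h2 := hx j v hne.symm
        have h3 := hy v j hne
        have h4 := hy j v hne.symm
        obtain ⟨h1a, h1b⟩ := h1
        obtain ⟨h2a, h2b⟩ := h2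
        obtain ⟨h3a, h3b⟩ := h3
        obtain ⟨h4a, h4b⟩ := h4
        rw [abs_le]
        refine ⟨?_, ?_⟩ <;> simp only [hf, res] <;> linarith
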